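/- arXiv:2310.10510 — 3 statements merged into one kernel-verified Lean document; each statement's English description precedes it below -/
import Mathlib

section
/- Let N < p and δ, η, a > 0. For ε > 0 define φ_ε(x) = A_ε e^{-ε|x|} with A_ε chosen so that ‖φ_ε‖_p = a. Then for ε sufficiently small, ∫_{ℝ^N} |∇φ_ε|^p dx - η ∫_{B_δ(0)} |φ_ε|^p dx < 0. -/
open MeasureTheory

private lemma fderiv_exp_norm_bound (N : ℕ) (B ε : ℝ) (hB : 0 < B) (hε : 0 < ε)
    (x : EuclideanSpace ℝ (Fin N)) (hx : x ≠ 0) :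
    ‖fderiv ℝ (fun y : EuclideanSpace ℝ (Fin N) => B * Real.exp (-(ε * ‖y‖))) x‖
      ≤ ε * |B * Real.exp (-(ε * ‖x‖))| := by
  have hg : DifferentiableAt ℝ (fun y : EuclideanSpace ℝ (Fin N) => ‖y‖) x :=
    (contDiffAt_norm ℝ hx).differentiableAt one_ne_zero
  set L := fderiv ℝ (fun y : EuclideanSpace ℝ (Fin N) => ‖y‖) x with hL
  have hgL : HasFDerivAt (fun y : EuclideanSpace ℝ (Fin N) => ‖y‖) L x := hg.hasFDerivAt
  have hLnorm : ‖L‖ ≤ 1 := by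
    have := hgL.le_of_lipschitz lipschitzWith_one_norm
    simpa using this
  have hh : HasDerivAt (fun t : ℝ => B * Real.exp (-(ε * t)))
      (B * (Real.exp (-(ε * ‖x‖)) * (-ε))) ‖x‖ := by
    have h1 : HasDerivAt (fun t : ℝ => -(ε * t)) (-ε) ‖x‖ := by
      simpa using ((hasDerivAt_id (‖x‖)).const_mul ε).fun_neg
    exact (h1.exp).const_mul B
  have hcomp : HasFDerivAt (fun y : EuclideanSpace ℝ (Fin N) => B * Real.exp (-(ε * ‖y‖)))
      ((B * (Real.exp (-(ε * ‖x‖)) * (-ε))) • L) x := hh.comp_hasFDerivAt x hgL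
  rw [hcomp.fderiv, norm_smul]
  have h2 : ‖B * (Real.exp (-(ε * ‖x‖)) * (-ε))‖ = ε * (B * Real.exp (-(ε * ‖x‖))) := by
    rw [Real.norm_eq_abs, abs_mul, abs_mul, abs_neg, abs_of_pos hB, abs_of_pos hε,
      abs_of_pos (Real.exp_pos _)]
    ring
  rw [h2, abs_of_pos (by positivity)]
  nlinarith [norm_nonneg L, mul_pos hB (Real.exp_pos (-(ε * ‖x‖))),
    mul_pos hε (mul_pos hB (Real.exp_pos (-(ε * ‖x‖))))]

set_option maxHeartbeats 800000 in
/-- for `N < p`, with `φ_ε(x) = A_ε e^{-ε|x|}` normalized so that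
`‖φ_ε‖_p = a`, one has `∫ |∇φ_ε|^p - η ∫_{B_δ(0)} |φ_ε|^p < 0` for all sufficiently
small `ε > 0`. -/
theorem test_function_subcritical (N : ℕ) (p δ η a : ℝ) (hN : 1 ≤ N) (hNp : (N : ℝ) < p)
    (hp : 1 < p) (hδ : 0 < δ) (hη : 0 < η) (ha : 0 < a) (A : ℝ → ℝ)
    (hA : ∀ ε, 0 < ε → 0 < A ε ∧
      (∫ x : EuclideanSpace ℝ (Fin N), |A ε * Real.exp (-(ε * ‖x‖))| ^ p) = a ^ p) :
    ∃ ε₀ > 0, ∀ ε, 0 < ε → ε < ε₀ →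
      (∫ x : EuclideanSpace ℝ (Fin N),
          ‖fderiv ℝ (fun y : EuclideanSpace ℝ (Fin N) => A ε * Real.exp (-(ε * ‖y‖))) x‖ ^ p)
        - η * (∫ x in Metric.ball (0 : EuclideanSpace ℝ (Fin N)) δ,
            |A ε * Real.exp (-(ε * ‖x‖))| ^ p) < 0 := by
  classical
  haveI : Nontrivial (EuclideanSpace ℝ (Fin N)) := by
    have : Nonempty (Fin N) := Fin.pos_iff_nonempty.mp hN
    infer_instance
  have hp0 : (0 : ℝ) < p := lt_trans one_pos hp
  have hap : (0 : ℝ) < a ^ p := Real.rpow_pos_of_pos ha p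
  -- pointwise rewriting of the integrand
  have key : ∀ B ε : ℝ, 0 < B → ∀ x : EuclideanSpace ℝ (Fin N),
      |B * Real.exp (-(ε * ‖x‖))| ^ p = B ^ p * Real.exp (-(p * (ε * ‖x‖))) := by
    intro B ε hB x
    rw [abs_of_pos (by positivity), Real.mul_rpow hB.le (Real.exp_pos _).le]
    congr 1
    rw [← Real.exp_mul]
    congr 1
    ring
  -- the scaled integral
  set I := ∫ y : EuclideanSpace ℝ (Fin N), Real.exp (-(p * ‖y‖)) with hIdef
  have scale : ∀ ε : ℝ, 0 < ε →
      (∫ x : EuclideanSpace ℝ (Fin N), Real.exp (-(p * (ε * ‖x‖)))) = (ε ^ N)⁻¹ * I := by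
    intro ε hε
    have h := Measure.integral_comp_smul_of_nonneg (volume : Measure (EuclideanSpace ℝ (Fin N)))
      (fun y => Real.exp (-(p * ‖y‖))) ε (hR := hε.le)
    simp only [norm_smul, Real.norm_eq_abs, abs_of_pos hε, finrank_euclideanSpace_fin,
      smul_eq_mul] at h
    exact h
  -- value of the full integral for each ε
  have full : ∀ ε : ℝ, 0 < ε → (A ε) ^ p * ((ε ^ N)⁻¹ * I) = a ^ p := by
    intro ε hε
    have h2 := (hA ε hε).2
    have hAε := (hA ε hε).1
    calc (A ε) ^ p * ((ε ^ N)⁻¹ * I)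
        = (A ε) ^ p * (∫ x : EuclideanSpace ℝ (Fin N), Real.exp (-(p * (ε * ‖x‖)))) := by
          rw [scale ε hε]
      _ = ∫ x : EuclideanSpace ℝ (Fin N), (A ε) ^ p * Real.exp (-(p * (ε * ‖x‖))) := by
          rw [integral_const_mul]
      _ = ∫ x : EuclideanSpace ℝ (Fin N), |A ε * Real.exp (-(ε * ‖x‖))| ^ p := by
          congr 1; funext x; rw [key (A ε) ε hAε x]
      _ = a ^ p := h2
  have hIpos : 0 < I := by
    have h1 := full 1 one_pos
    have hA1 := (hA 1 one_pos).1
    have hA1p : 0 < (A 1) ^ p := Real.rpow_pos_of_pos hA1 p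
    simp only [one_pow, inv_one, one_mul] at h1
    nlinarith
  -- integrability of the p-th power
  have hint : ∀ ε : ℝ, 0 < ε →
      Integrable (fun x : EuclideanSpace ℝ (Fin N) => |A ε * Real.exp (-(ε * ‖x‖))| ^ p) := by
    intro ε hε
    by_contra h
    have := integral_undef h
    rw [(hA ε hε).2] at this
    exact absurd this (ne_of_gt hap)
  -- gradient integral bound
  have hae : ∀ᵐ x : EuclideanSpace ℝ (Fin N), x ≠ 0 := by
    rw [MeasureTheory.ae_iff]
    have : {x : EuclideanSpace ℝ (Fin N) | ¬x ≠ 0} = {0} := by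
      ext x; simp
    rw [this]
    exact measure_singleton _
  have grad : ∀ ε : ℝ, 0 < ε →
      (∫ x : EuclideanSpace ℝ (Fin N),
          ‖fderiv ℝ (fun y : EuclideanSpace ℝ (Fin N) => A ε * Real.exp (-(ε * ‖y‖))) x‖ ^ p)
        ≤ ε ^ p * a ^ p := by
    intro ε hε
    have hAε := (hA ε hε).1
    have hmono : (∫ x : EuclideanSpace ℝ (Fin N),
          ‖fderiv ℝ (fun y : EuclideanSpace ℝ (Fin N) => A ε * Real.exp (-(ε * ‖y‖))) x‖ ^ p)
        ≤ ∫ x : EuclideanSpace ℝ (Fin N), ε ^ p * |A ε * Real.exp (-(ε * ‖x‖))| ^ p := by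
      apply integral_mono_of_nonneg
      · filter_upwards with x
        exact Real.rpow_nonneg (norm_nonneg _) p
      · exact (hint ε hε).const_mul _
      · filter_upwards [hae] with x hx
        have hb := fderiv_exp_norm_bound N (A ε) ε hAε hε x hx
        calc ‖fderiv ℝ (fun y : EuclideanSpace ℝ (Fin N) => A ε * Real.exp (-(ε * ‖y‖))) x‖ ^ p
            ≤ (ε * |A ε * Real.exp (-(ε * ‖x‖))|) ^ p :=
              Real.rpow_le_rpow (norm_nonneg _) hb hp0.le
          _ = ε ^ p * |A ε * Real.exp (-(ε * ‖x‖))| ^ p :=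
              Real.mul_rpow hε.le (abs_nonneg _)
    calc (∫ x : EuclideanSpace ℝ (Fin N),
          ‖fderiv ℝ (fun y : EuclideanSpace ℝ (Fin N) => A ε * Real.exp (-(ε * ‖y‖))) x‖ ^ p)
        ≤ ∫ x : EuclideanSpace ℝ (Fin N), ε ^ p * |A ε * Real.exp (-(ε * ‖x‖))| ^ p := hmono
      _ = ε ^ p * a ^ p := by rw [integral_const_mul, (hA ε hε).2]
  -- ball volume
  set V := (volume (Metric.ball (0 : EuclideanSpace ℝ (Fin N)) δ)).toReal with hVdef
  have hVpos : 0 < V := by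
    rw [hVdef]
    apply ENNReal.toReal_pos
    · exact (Metric.measure_ball_pos _ _ hδ).ne'
    · exact measure_ball_lt_top.ne
  -- ball integral lower bound
  have ball : ∀ ε : ℝ, 0 < ε →
      (A ε) ^ p * (Real.exp (-(p * (ε * δ))) * V)
        ≤ ∫ x in Metric.ball (0 : EuclideanSpace ℝ (Fin N)) δ,
            |A ε * Real.exp (-(ε * ‖x‖))| ^ p := by
    intro ε hε
    have hAε := (hA ε hε).1
    have hAεp : 0 < (A ε) ^ p := Real.rpow_pos_of_pos hAε p
    have hexpint : Integrable (fun x : EuclideanSpace ℝ (Fin N) =>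
        Real.exp (-(p * (ε * ‖x‖)))) := by
      have h1 : Integrable (fun x : EuclideanSpace ℝ (Fin N) =>
          ((A ε) ^ p)⁻¹ * ((A ε) ^ p * Real.exp (-(p * (ε * ‖x‖))))) := by
        apply Integrable.const_mul
        have := hint ε hε
        simpa only [key (A ε) ε hAε] using this
      simpa [inv_mul_cancel_left₀ hAεp.ne'] using h1
    have hs : MeasurableSet (Metric.ball (0 : EuclideanSpace ℝ (Fin N)) δ) :=
      measurableSet_ball
    have hlow : Real.exp (-(p * (ε * δ))) * V
        ≤ ∫ x in Metric.ball (0 : EuclideanSpace ℝ (Fin N)) δ,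
            Real.exp (-(p * (ε * ‖x‖))) := by
      refine setIntegral_ge_of_const_le_real hs measure_ball_lt_top.ne ?_ hexpint.integrableOn
      intro x hx
      apply Real.exp_le_exp.mpr
      have hxδ : ‖x‖ ≤ δ := by
        have := mem_ball_zero_iff.mp hx
        linarith
      nlinarith [mul_le_mul_of_nonneg_left hxδ (by positivity : (0:ℝ) ≤ p * ε)]
    calc (A ε) ^ p * (Real.exp (-(p * (ε * δ))) * V)
        ≤ (A ε) ^ p * ∫ x in Metric.ball (0 : EuclideanSpace ℝ (Fin N)) δ,
            Real.exp (-(p * (ε * ‖x‖))) := by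
          exact mul_le_mul_of_nonneg_left hlow hAεp.le
      _ = ∫ x in Metric.ball (0 : EuclideanSpace ℝ (Fin N)) δ,
            (A ε) ^ p * Real.exp (-(p * (ε * ‖x‖))) := by rw [integral_const_mul]
      _ = ∫ x in Metric.ball (0 : EuclideanSpace ℝ (Fin N)) δ,
            |A ε * Real.exp (-(ε * ‖x‖))| ^ p := by
          congr 1; funext x; rw [key (A ε) ε hAε x]
  -- choice of ε₀
  set c := η * V / (2 * I) with hcdef
  have hc : 0 < c := by positivity
  have hpN : 0 < p - (N : ℝ) := by linarith
  refine ⟨min (1 / (2 * p * δ)) (min 1 (c ^ (p - (N : ℝ))⁻¹)), ?_, ?_⟩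
  · apply lt_min (by positivity) (lt_min one_pos (Real.rpow_pos_of_pos hc _))
  intro ε hε hεlt
  have hε1 : ε < 1 := lt_of_lt_of_le hεlt (le_trans (min_le_right _ _) (min_le_left _ _))
  have hε2 : ε < c ^ (p - (N : ℝ))⁻¹ :=
    lt_of_lt_of_le hεlt (le_trans (min_le_right _ _) (min_le_right _ _))
  have hε3 : ε < 1 / (2 * p * δ) := lt_of_lt_of_le hεlt (min_le_left _ _)
  -- ε ^ (p - N) < c
  have hεpN : ε ^ (p - (N : ℝ)) < c := by
    have := Real.rpow_lt_rpow hε.le hε2 hpN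
    rwa [Real.rpow_inv_rpow hc.le hpN.ne'] at this
  -- exp lower bound
  have hexphalf : (1 : ℝ) / 2 ≤ Real.exp (-(p * (ε * δ))) := by
    have h1 : p * (ε * δ) ≤ 1 / 2 := by
      have : ε * (2 * p * δ) < 1 := by
        rw [div_eq_mul_inv, one_mul] at hε3
        calc ε * (2 * p * δ) < (2 * p * δ)⁻¹ * (2 * p * δ) := by
              apply mul_lt_mul_of_pos_right hε3 (by positivity)
          _ = 1 := by field_simp
      nlinarith
    have h2 := Real.add_one_le_exp (-(p * (ε * δ)))
    linarith
  -- split ε^p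
  have hεsplit : ε ^ p = ε ^ (p - (N : ℝ)) * ε ^ N := by
    rw [← Real.rpow_natCast ε N, ← Real.rpow_add hε]
    congr 1; ring
  -- value of (A ε)^p
  have hfull := full ε hε
  have hεN : (0 : ℝ) < ε ^ N := pow_pos hε N
  have hAεp : 0 < (A ε) ^ p := Real.rpow_pos_of_pos (hA ε hε).1 p
  have hεN' : (ε : ℝ) ^ N ≠ 0 := hεN.ne'
  have hAval : (A ε) ^ p = a ^ p * ε ^ N / I := by
    rw [eq_div_iff hIpos.ne']
    field_simp at hfull
    linarith
  -- combine
  have hball := ball ε hε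
  have hgrad := grad ε hε
  have hεpNpos : 0 < ε ^ (p - (N : ℝ)) := Real.rpow_pos_of_pos hε _
  have hball' := mul_le_mul_of_nonneg_left hball hη.le
  have hkey : ε ^ p * a ^ p < η * ((A ε) ^ p * (Real.exp (-(p * (ε * δ))) * V)) := by
    rw [hAval, hεsplit]
    rw [hcdef] at hεpN
    have hexp : Real.exp (-(p * (ε * δ))) ≤ 1 := by
      rw [Real.exp_le_one_iff]
      nlinarith [mul_pos hp0 (mul_pos hε hδ)]
    have h3 : ε ^ (p - (N : ℝ)) * (2 * I) < η * V := by
      have := mul_lt_mul_of_pos_right hεpN (by positivity : (0:ℝ) < 2 * I)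
      rwa [div_mul_cancel₀ _ (by positivity : (2 * I : ℝ) ≠ 0)] at this
    have h4 : η * (a ^ p * ε ^ N / I * (Real.exp (-(p * (ε * δ))) * V))
        ≥ η * (a ^ p * ε ^ N / I * ((1 / 2) * V)) := by
      apply mul_le_mul_of_nonneg_left _ hη.le
      apply mul_le_mul_of_nonneg_left _ (by positivity)
      apply mul_le_mul_of_nonneg_right hexphalf hVpos.le
    have h5 : ε ^ (p - (N : ℝ)) * ε ^ N * a ^ p < η * (a ^ p * ε ^ N / I * ((1 / 2) * V)) := by
      rw [show η * (a ^ p * ε ^ N / I * ((1 / 2) * V))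
            = (η * V) * (a ^ p * ε ^ N) / (2 * I) by
          field_simp]
      rw [lt_div_iff₀ (by positivity)]
      calc ε ^ (p - (N : ℝ)) * ε ^ N * a ^ p * (2 * I)
          = (ε ^ (p - (N : ℝ)) * (2 * I)) * (ε ^ N * a ^ p) := by ring
        _ < (η * V) * (ε ^ N * a ^ p) := mul_lt_mul_of_pos_right h3 (by positivity)
        _ = η * V * (a ^ p * ε ^ N) := by ring
    linarith
  linarith
end

section
/- Let N > p > 1, δ > 0, η > 0 with ηδ^p > N((N-p)/(p-1))^{p-1}. For integer k ≥ 1 define φ_k(x) = A_k ψ_k(|x|) where ψ_k(t) = 1 for t ≤ δ, ψ_k(t) = (1+1/k)δ^{(N-p)/(p-1)}t^{(p-N)/(p-1)} - 1/k for δ < t ≤ (k+1)^{(p-1)/(N-p)}δ, and ψ_k(t)=0 otherwise. Then for k sufficiently large, ∫_{ℝ^N}|∇φ_k|^p dx - η∫_{B_δ(0)}|φ_k|^p dx ≤ ω_N A_k^p δ^{N-p}(N((N-p)/(p-1))^{p-1}(1+1/k)^p - ηδ^p) < 0. -/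
open MeasureTheory

/-- The test function `φ_k = A_k ψ_k(|x|)` for the case `N > p`. -/
noncomputable def phiPow (N : ℕ) (p δ : ℝ) (A : ℕ → ℝ) (k : ℕ)
    (x : EuclideanSpace ℝ (Fin N)) : ℝ :=
  A k * (if ‖x‖ ≤ δ then 1
    else if ‖x‖ ≤ ((k : ℝ) + 1) ^ ((p - 1) / ((N : ℝ) - p)) * δ then
      (1 + 1 / (k : ℝ)) * δ ^ (((N : ℝ) - p) / (p - 1)) * ‖x‖ ^ ((p - (N : ℝ)) / (p - 1))
        - 1 / (k : ℝ)
    else 0)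

open Set Metric Filter

lemma phiPow_grad_ae (N : ℕ) (p δ : ℝ) (A : ℕ → ℝ) (k : ℕ)
    (hp : 1 < p) (hpN : p < (N : ℝ)) (hδ : 0 < δ) (hAk : 0 < A k) (hk : 1 ≤ k) :
    ∀ᵐ x : EuclideanSpace ℝ (Fin N),
      ‖fderiv ℝ (phiPow N p δ A k) x‖ ^ p =
      Set.indicator (Set.Ioo δ (((k : ℝ) + 1) ^ ((p - 1) / ((N : ℝ) - p)) * δ))
        (fun r => (A k * ((1 + 1 / (k : ℝ)) * δ ^ (((N : ℝ) - p) / (p - 1))) *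
            (((N : ℝ) - p) / (p - 1))) ^ p *
          r ^ (((p - (N : ℝ)) / (p - 1) - 1) * p)) ‖x‖ := by
  have hN1 : 1 < N := by exact_mod_cast hp.trans hpN
  haveI : Nontrivial (EuclideanSpace ℝ (Fin N)) := by
    refine ⟨⟨0, EuclideanSpace.single ⟨0, by omega⟩ 1, fun h => ?_⟩⟩
    have := congrArg (fun f : EuclideanSpace ℝ (Fin N) => f ⟨0, by omega⟩) h
    simp [EuclideanSpace.single_apply] at this
  have hp1 : (0:ℝ) < p - 1 := by linarith
  have hNp : (0:ℝ) < (N:ℝ) - p := by linarith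
  set q : ℝ := ((N:ℝ) - p) / (p - 1) with hqdef
  set α : ℝ := (p - (N:ℝ)) / (p - 1) with hαdef
  have hq0 : 0 < q := div_pos hNp hp1
  have hα : α = -q := by rw [hqdef, hαdef]; ring
  set R : ℝ := ((k : ℝ) + 1) ^ ((p - 1) / ((N : ℝ) - p)) * δ with hRdef
  have hk1 : (1:ℝ) ≤ (k:ℝ) := by exact_mod_cast hk
  have hδR : δ < R := by
    have h1 : (1:ℝ) < ((k : ℝ) + 1) ^ ((p - 1) / ((N : ℝ) - p)) := by
      rw [Real.one_lt_rpow_iff_of_pos (by linarith)]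
      exact Or.inl ⟨by linarith, div_pos hp1 hNp⟩
    calc δ = 1 * δ := (one_mul δ).symm
    _ < R := by rw [hRdef]; exact mul_lt_mul_of_pos_right h1 hδ
  set Ck : ℝ := A k * ((1 + 1 / (k : ℝ)) * δ ^ q) with hCkdef
  have hCk : 0 < Ck := by
    apply mul_pos hAk
    apply mul_pos (by positivity)
    exact Real.rpow_pos_of_pos hδ q
  have hsph : volume ((sphere (0 : EuclideanSpace ℝ (Fin N)) δ) ∪
      sphere (0 : EuclideanSpace ℝ (Fin N)) R) = 0 :=
    le_antisymm (le_trans (measure_union_le _ _)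
      (by rw [Measure.addHaar_sphere, Measure.addHaar_sphere]; simp)) zero_le
  filter_upwards [measure_eq_zero_iff_ae_notMem.mp hsph] with x hx
  have hxδ : ‖x‖ ≠ δ := fun h => hx (Or.inl (mem_sphere_zero_iff_norm.2 h))
  have hxR : ‖x‖ ≠ R := fun h => hx (Or.inr (mem_sphere_zero_iff_norm.2 h))
  rcases lt_or_gt_of_ne hxδ with h1 | h1
  · -- ‖x‖ < δ : locally constant
    have hev : phiPow N p δ A k =ᶠ[nhds x] fun _ => A k := by
      have ho : IsOpen {y : EuclideanSpace ℝ (Fin N) | ‖y‖ < δ} :=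
        isOpen_lt continuous_norm continuous_const
      filter_upwards [ho.mem_nhds h1] with y hy
      simp [phiPow, le_of_lt hy]
    rw [hev.fderiv_eq, fderiv_fun_const]
    rw [Set.indicator_of_notMem (fun hm => absurd hm.1 (not_lt.2 h1.le))]
    simp [Real.zero_rpow (by linarith : p ≠ 0)]
  rcases lt_or_gt_of_ne hxR with h2 | h2
  · -- δ < ‖x‖ < R : the power branch
    have hx0 : x ≠ 0 := fun h0 => by rw [h0, norm_zero] at h1; linarith
    have hxn : ‖x‖ ≠ 0 := ne_of_gt (hδ.trans h1)
    have hdn : DifferentiableAt ℝ (fun y : EuclideanSpace ℝ (Fin N) => ‖y‖) x :=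
      (contDiffAt_norm ℝ (n := 1) hx0).differentiableAt one_ne_zero
    have hfd : HasFDerivAt (fun y : EuclideanSpace ℝ (Fin N) => ‖y‖)
        (fderiv ℝ (fun y : EuclideanSpace ℝ (Fin N) => ‖y‖) x) x := hdn.hasFDerivAt
    have hcomp := (Real.hasDerivAt_rpow_const (x := ‖x‖) (p := α)
      (Or.inl hxn)).comp_hasFDerivAt x hfd
    have h3 : HasFDerivAt (fun y : EuclideanSpace ℝ (Fin N) => Ck * ‖y‖ ^ α - A k * (1 / (k:ℝ)))
        ((Ck * (α * ‖x‖ ^ (α - 1))) •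
          fderiv ℝ (fun y : EuclideanSpace ℝ (Fin N) => ‖y‖) x) x := by
      have h4 := (hcomp.const_mul Ck).sub_const (A k * (1 / (k:ℝ)))
      simpa [Function.comp, smul_smul] using h4
    have hev : phiPow N p δ A k =ᶠ[nhds x]
        fun y => Ck * ‖y‖ ^ α - A k * (1 / (k:ℝ)) := by
      have ho : IsOpen {y : EuclideanSpace ℝ (Fin N) | δ < ‖y‖ ∧ ‖y‖ < R} :=
        (isOpen_lt continuous_const continuous_norm).inter
          (isOpen_lt continuous_norm continuous_const)
      filter_upwards [ho.mem_nhds ⟨h1, h2⟩] with y hy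
      simp only [phiPow, not_le.2 hy.1, if_false, hy.2.le, if_true, hCkdef]
      rw [if_pos (show ‖y‖ ≤ ((k : ℝ) + 1) ^ ((p - 1) / ((N : ℝ) - p)) * δ from hy.2.le)]
      ring
    rw [hev.fderiv_eq, h3.fderiv, norm_smul, norm_fderiv_norm hdn, mul_one,
      Set.indicator_of_mem (Set.mem_Ioo.mpr ⟨h1, h2⟩)]
    have habs : ‖Ck * (α * ‖x‖ ^ (α - 1))‖ = Ck * q * ‖x‖ ^ (α - 1) := by
      rw [Real.norm_eq_abs, abs_mul, abs_mul, abs_mul, abs_of_pos hAk,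
        abs_of_pos (by positivity : (0:ℝ) < 1 + 1 / (k:ℝ)),
        abs_of_nonneg (Real.rpow_nonneg hδ.le q), abs_mul,
        abs_of_nonneg (Real.rpow_nonneg (norm_nonneg x) _), hα, abs_neg, abs_of_pos hq0,
        hCkdef]
      ring
    rw [habs, Real.mul_rpow (by positivity) (Real.rpow_nonneg (norm_nonneg x) _),
      Real.rpow_mul (norm_nonneg x)]
  · -- R < ‖x‖ : locally zero
    have hev : phiPow N p δ A k =ᶠ[nhds x] fun _ => (0:ℝ) := by
      have ho : IsOpen {y : EuclideanSpace ℝ (Fin N) | R < ‖y‖} :=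
        isOpen_lt continuous_const continuous_norm
      filter_upwards [ho.mem_nhds h2] with y hy
      have hyδ : ¬ ‖y‖ ≤ δ := not_le.2 (hδR.trans hy)
      have hyR : ¬ ‖y‖ ≤ R := not_le.2 hy
      simp [phiPow, hyδ, hyR]
      exact fun h => absurd h hyR
    rw [hev.fderiv_eq, fderiv_fun_const]
    rw [Set.indicator_of_notMem (fun hm => absurd hm.2 (not_lt.2 h2.le))]
    simp [Real.zero_rpow (by linarith : p ≠ 0)]

lemma phiPow_grad_int (N : ℕ) (p δ : ℝ) (A : ℕ → ℝ) (k : ℕ)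
    (hp : 1 < p) (hpN : p < (N : ℝ)) (hδ : 0 < δ) (hAk : 0 < A k) (hk : 1 ≤ k) :
    (∫ x : EuclideanSpace ℝ (Fin N), ‖fderiv ℝ (phiPow N p δ A k) x‖ ^ p)
      ≤ (volume (Metric.ball (0 : EuclideanSpace ℝ (Fin N)) 1)).toReal * A k ^ p *
          δ ^ ((N : ℝ) - p) *
          ((N : ℝ) * (((N : ℝ) - p) / (p - 1)) ^ (p - 1) * (1 + 1 / (k : ℝ)) ^ p) := by
  have hN1 : 1 < N := by exact_mod_cast hp.trans hpN
  haveI : Nontrivial (EuclideanSpace ℝ (Fin N)) := by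
    refine ⟨⟨0, EuclideanSpace.single ⟨0, by omega⟩ 1, fun h => ?_⟩⟩
    have := congrArg (fun f : EuclideanSpace ℝ (Fin N) => f ⟨0, by omega⟩) h
    simp [EuclideanSpace.single_apply] at this
  have hp1 : (0:ℝ) < p - 1 := by linarith
  have hNp : (0:ℝ) < (N:ℝ) - p := by linarith
  set q : ℝ := ((N:ℝ) - p) / (p - 1) with hqdef
  set α : ℝ := (p - (N:ℝ)) / (p - 1) with hαdef
  have hq0 : 0 < q := div_pos hNp hp1
  set R : ℝ := ((k : ℝ) + 1) ^ ((p - 1) / ((N : ℝ) - p)) * δ with hRdef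
  set Ck : ℝ := A k * ((1 + 1 / (k : ℝ)) * δ ^ q) with hCkdef
  have hCk : 0 < Ck := by
    apply mul_pos hAk
    exact mul_pos (by positivity) (Real.rpow_pos_of_pos hδ q)
  set C : ℝ := (Ck * q) ^ p with hCdef
  have hC0 : 0 ≤ C := Real.rpow_nonneg (by positivity) p
  set G : ℝ → ℝ := Set.indicator (Set.Ioo δ R) (fun r => C * r ^ ((α - 1) * p)) with hGdef
  set γ : ℝ := ((N:ℝ) - 1) + (α - 1) * p with hγdef
  have hγeq : γ = -(((N:ℝ) - 1) / (p - 1)) := by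
    rw [hγdef, hαdef]; field_simp; ring
  have hγlt : γ < -1 := by
    rw [hγeq]
    have : (1:ℝ) < ((N:ℝ) - 1) / (p - 1) := (one_lt_div hp1).2 (by linarith)
    linarith
  have h0 : (∫ x : EuclideanSpace ℝ (Fin N), ‖fderiv ℝ (phiPow N p δ A k) x‖ ^ p)
      = ∫ x : EuclideanSpace ℝ (Fin N), G ‖x‖ :=
    integral_congr_ae (phiPow_grad_ae N p δ A k hp hpN hδ hAk hk)
  rw [h0, integral_fun_norm_addHaar volume G, finrank_euclideanSpace_fin, nsmul_eq_mul,
    smul_eq_mul]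
  have hcast : ((N - 1 : ℕ) : ℝ) = (N:ℝ) - 1 := by
    rw [Nat.cast_sub hN1.le]; norm_num
  have hrw : ∀ y ∈ Set.Ioi (0:ℝ), y ^ (N - 1) • G y
      = Set.indicator (Set.Ioo δ R) (fun r => C * r ^ γ) y := by
    intro y hy
    have hy0 : (0:ℝ) < y := hy
    by_cases hm : y ∈ Set.Ioo δ R
    · rw [hGdef, Set.indicator_of_mem hm, Set.indicator_of_mem hm, smul_eq_mul,
        ← Real.rpow_natCast y (N - 1), hcast, hγdef, Real.rpow_add hy0]
      ring
    · rw [hGdef, Set.indicator_of_notMem hm, Set.indicator_of_notMem hm, smul_zero]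
  have hint : Set.Ioi (0:ℝ) ∩ Set.Ioo δ R = Set.Ioo δ R :=
    Set.inter_eq_self_of_subset_right (fun y hy => lt_trans hδ hy.1)
  rw [setIntegral_congr_fun measurableSet_Ioi hrw,
    setIntegral_indicator measurableSet_Ioo, hint]
  have hInt : IntegrableOn (fun y : ℝ => C * y ^ γ) (Set.Ioi δ) :=
    (integrableOn_Ioi_rpow_of_lt hγlt hδ).const_mul C
  have hnn : 0 ≤ᵐ[volume.restrict (Set.Ioi δ)] fun y : ℝ => C * y ^ γ := by
    refine (ae_restrict_iff' measurableSet_Ioi).2 (ae_of_all _ fun y hy => ?_)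
    have hy0 : (0:ℝ) < y := lt_trans hδ hy
    exact mul_nonneg hC0 (Real.rpow_nonneg hy0.le _)
  have hmono : (∫ y in Set.Ioo δ R, C * y ^ γ) ≤ ∫ y in Set.Ioi δ, C * y ^ γ :=
    setIntegral_mono_set hInt hnn (HasSubset.Subset.eventuallyLE Set.Ioo_subset_Ioi_self)
  have h5 : γ + 1 = -q := by rw [hγeq, hqdef]; field_simp; ring
  have hval : (∫ y in Set.Ioi δ, C * y ^ γ) = C * (δ ^ (-q) / q) := by
    rw [integral_const_mul, integral_Ioi_rpow_of_lt hγlt hδ, h5, neg_div_neg_eq]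
  have hω : (0:ℝ) ≤ (volume (Metric.ball (0 : EuclideanSpace ℝ (Fin N)) 1)).toReal :=
    ENNReal.toReal_nonneg
  calc (N:ℝ) * ((volume (Metric.ball (0 : EuclideanSpace ℝ (Fin N)) 1)).toReal *
        ∫ y in Set.Ioo δ R, C * y ^ γ)
      ≤ (N:ℝ) * ((volume (Metric.ball (0 : EuclideanSpace ℝ (Fin N)) 1)).toReal *
        (C * (δ ^ (-q) / q))) := by
        apply mul_le_mul_of_nonneg_left _ (Nat.cast_nonneg N)
        exact mul_le_mul_of_nonneg_left (le_of_le_of_eq hmono hval) hω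
    _ = (volume (Metric.ball (0 : EuclideanSpace ℝ (Fin N)) 1)).toReal * A k ^ p *
          δ ^ ((N : ℝ) - p) * ((N : ℝ) * q ^ (p - 1) * (1 + 1 / (k : ℝ)) ^ p) := by
        have e1 : C = (A k) ^ p * ((1 + 1 / (k:ℝ)) ^ p * (δ ^ (q * p) * q ^ p)) := by
          rw [hCdef, Real.mul_rpow hCk.le hq0.le, hCkdef,
            Real.mul_rpow hAk.le (by positivity),
            Real.mul_rpow (by positivity) (Real.rpow_nonneg hδ.le q),
            ← Real.rpow_mul hδ.le]
          ring
        have e2 : δ ^ (q * p) * δ ^ (-q) = δ ^ ((N:ℝ) - p) := by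
          rw [← Real.rpow_add hδ]
          congr 1
          rw [hqdef]; field_simp; ring
        have e3 : q ^ (p - 1) = q ^ p / q := by
          rw [Real.rpow_sub hq0, Real.rpow_one]
        rw [e1, e3, ← e2]
        field_simp

lemma phiPow_ball_int (N : ℕ) (p δ : ℝ) (A : ℕ → ℝ) (k : ℕ)
    (hp : 1 < p) (hpN : p < (N : ℝ)) (hδ : 0 < δ) (hAk : 0 < A k) :
    (∫ x in Metric.ball (0 : EuclideanSpace ℝ (Fin N)) δ, |phiPow N p δ A k x| ^ p)
      = (volume (Metric.ball (0 : EuclideanSpace ℝ (Fin N)) 1)).toReal * A k ^ p *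
          δ ^ ((N:ℝ) - p) * δ ^ p := by
  have hN1 : 1 < N := by exact_mod_cast hp.trans hpN
  haveI : Nontrivial (EuclideanSpace ℝ (Fin N)) := by
    refine ⟨⟨0, EuclideanSpace.single ⟨0, by omega⟩ 1, fun h => ?_⟩⟩
    have := congrArg (fun f : EuclideanSpace ℝ (Fin N) => f ⟨0, by omega⟩) h
    simp [EuclideanSpace.single_apply] at this
  have h1 : ∀ x ∈ Metric.ball (0 : EuclideanSpace ℝ (Fin N)) δ,
      |phiPow N p δ A k x| ^ p = A k ^ p := by
    intro x hx
    have hx' : ‖x‖ < δ := mem_ball_zero_iff.mp hx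
    simp [phiPow, hx'.le, abs_of_pos hAk]
  rw [setIntegral_congr_fun measurableSet_ball h1, setIntegral_const, smul_eq_mul, measureReal_def,
    Measure.addHaar_ball volume _ hδ.le, finrank_euclideanSpace_fin, ENNReal.toReal_mul,
    ENNReal.toReal_ofReal (by positivity), ← Real.rpow_natCast δ N]
  have h2 : ((N:ℕ):ℝ) = ((N:ℝ) - p) + p := by ring
  rw [h2, Real.rpow_add hδ]
  ring

/-- for `N > p > 1` and `ηδ^p > N((N-p)/(p-1))^{p-1}`, the truncated
power test functions satisfy, for all sufficiently large `k`,
`∫|∇φ_k|^p - η∫_{B_δ}|φ_k|^p ≤ ω_N A_k^p δ^{N-p}(N((N-p)/(p-1))^{p-1}(1+1/k)^p - ηδ^p) < 0`. -/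
theorem test_function_supercritical (N : ℕ) (p δ η : ℝ) (hp : 1 < p) (hpN : p < (N : ℝ))
    (hδ : 0 < δ) (hη : 0 < η)
    (hηδ : (N : ℝ) * (((N : ℝ) - p) / (p - 1)) ^ (p - 1) < η * δ ^ p)
    (A : ℕ → ℝ) (hA : ∀ k, 0 < A k) :
    ∃ k₀ : ℕ, 1 ≤ k₀ ∧ ∀ k, k₀ ≤ k →
      ((∫ x : EuclideanSpace ℝ (Fin N), ‖fderiv ℝ (phiPow N p δ A k) x‖ ^ p)
          - η * ∫ x in Metric.ball (0 : EuclideanSpace ℝ (Fin N)) δ, |phiPow N p δ A k x| ^ p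
        ≤ (volume (Metric.ball (0 : EuclideanSpace ℝ (Fin N)) 1)).toReal * A k ^ p *
            δ ^ ((N : ℝ) - p) *
            ((N : ℝ) * (((N : ℝ) - p) / (p - 1)) ^ (p - 1) * (1 + 1 / (k : ℝ)) ^ p
              - η * δ ^ p)) ∧
      (volume (Metric.ball (0 : EuclideanSpace ℝ (Fin N)) 1)).toReal * A k ^ p *
          δ ^ ((N : ℝ) - p) *
          ((N : ℝ) * (((N : ℝ) - p) / (p - 1)) ^ (p - 1) * (1 + 1 / (k : ℝ)) ^ p
            - η * δ ^ p) < 0 := by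
  have hp1 : (0:ℝ) < p - 1 := by linarith
  have hNp : (0:ℝ) < (N:ℝ) - p := by linarith
  have htend : Filter.Tendsto
      (fun k : ℕ => (N : ℝ) * (((N : ℝ) - p) / (p - 1)) ^ (p - 1) * (1 + 1 / (k : ℝ)) ^ p)
      Filter.atTop (nhds ((N : ℝ) * (((N : ℝ) - p) / (p - 1)) ^ (p - 1))) := by
    have h1 : Filter.Tendsto (fun k : ℕ => 1 + 1 / (k : ℝ)) Filter.atTop (nhds 1) := by
      simpa using tendsto_const_nhds.add (tendsto_one_div_atTop_nhds_zero_nat (𝕜 := ℝ))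
    have h2 := h1.rpow_const (p := p) (Or.inr (by linarith : (0:ℝ) ≤ p))
    rw [Real.one_rpow] at h2
    simpa using tendsto_const_nhds.mul h2
  have hev := htend.eventually_lt_const hηδ
  obtain ⟨k₁, hk₁⟩ := Filter.eventually_atTop.mp hev
  refine ⟨max k₁ 1, le_max_right _ _, fun k hk => ?_⟩
  have hk1 : 1 ≤ k := le_trans (le_max_right k₁ 1) hk
  have hklt := hk₁ k (le_trans (le_max_left _ _) hk)
  have hω : 0 < (volume (Metric.ball (0 : EuclideanSpace ℝ (Fin N)) 1)).toReal :=
    ENNReal.toReal_pos (measure_ball_pos volume _ one_pos).ne' measure_ball_lt_top.ne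
  have hAp : 0 < A k ^ p := Real.rpow_pos_of_pos (hA k) p
  have hδNp : 0 < δ ^ ((N:ℝ) - p) := Real.rpow_pos_of_pos hδ _
  constructor
  · rw [phiPow_ball_int N p δ A k hp hpN hδ (hA k)]
    have key := phiPow_grad_int N p δ A k hp hpN hδ (hA k) hk1
    calc (∫ x : EuclideanSpace ℝ (Fin N), ‖fderiv ℝ (phiPow N p δ A k) x‖ ^ p)
          - η * ((volume (Metric.ball (0 : EuclideanSpace ℝ (Fin N)) 1)).toReal * A k ^ p *
              δ ^ ((N:ℝ) - p) * δ ^ p)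
        ≤ (volume (Metric.ball (0 : EuclideanSpace ℝ (Fin N)) 1)).toReal * A k ^ p *
            δ ^ ((N : ℝ) - p) *
            ((N : ℝ) * (((N : ℝ) - p) / (p - 1)) ^ (p - 1) * (1 + 1 / (k : ℝ)) ^ p)
          - η * ((volume (Metric.ball (0 : EuclideanSpace ℝ (Fin N)) 1)).toReal * A k ^ p *
              δ ^ ((N:ℝ) - p) * δ ^ p) := by linarith
      _ = (volume (Metric.ball (0 : EuclideanSpace ℝ (Fin N)) 1)).toReal * A k ^ p *
            δ ^ ((N : ℝ) - p) *
            ((N : ℝ) * (((N : ℝ) - p) / (p - 1)) ^ (p - 1) * (1 + 1 / (k : ℝ)) ^ p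
              - η * δ ^ p) := by ring
  · exact mul_neg_of_pos_of_neg (mul_pos (mul_pos hω hAp) hδNp) (by linarith)
end

section
/- Let θ ∈ (0,1) and m_a > 0. Suppose real numbers E₀ and β₁, μ ≥ 0 satisfy μ^p + β₁^p ≤ a^p (a > 0), E₀ ≥ -θ m_a (μ/a)^p, and the quantity Σ ≥ m_a (β₁/a)^{-pθ} with 0 < β₁ ≤ a. Then E₀ + Σ ≥ m_a. -/
lemma key_rpow_bound {x θ : ℝ} (hx0 : 0 < x) (hx1 : x ≤ 1) (hθ0 : 0 < θ) (hθ1 : θ < 1) :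
    1 + θ * (1 - x) ≤ x ^ (-θ) := by
  have hb : x ^ θ ≤ 1 + θ * (x - 1) := by
    have := rpow_one_add_le_one_add_mul_self (s := x - 1) (p := θ)
      (by linarith) hθ0.le hθ1.le
    simpa using this
  have hpos : 0 < x ^ θ := Real.rpow_pos_of_pos hx0 θ
  have h1 : (1 + θ * (1 - x)) * x ^ θ ≤ 1 := by
    have ht : 0 ≤ θ * (1 - x) := mul_nonneg hθ0.le (by linarith)
    have h2 := mul_le_mul_of_nonneg_left hb (by linarith : (0:ℝ) ≤ 1 + θ * (1 - x))
    nlinarith [sq_nonneg (θ * (1 - x))]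
  have h2 : x ^ (-θ) = (x ^ θ)⁻¹ := Real.rpow_neg hx0.le θ
  rw [h2, ge_iff_le.symm, ← one_div]
  exact (le_div_iff₀ hpos).mpr h1

/-- splitting-energy comparison. If `θ ∈ (0,1)`, `m > 0`, `a > 0`,
`μ ≥ 0`, `0 < β₁ ≤ a`, `μ^p + β₁^p ≤ a^p`, `E₀ ≥ -θ m (μ/a)^p` and
`Σ ≥ m (β₁/a)^(-pθ)`, then `E₀ + Σ ≥ m`. -/
theorem splitting_energy_comparison (p θ m a μ β₁ E₀ Sg : ℝ)
    (hp : 1 < p) (hθ0 : 0 < θ) (hθ1 : θ < 1) (hm : 0 < m) (ha : 0 < a)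
    (hμ : 0 ≤ μ) (hβ0 : 0 < β₁) (hβa : β₁ ≤ a)
    (hsum : μ ^ p + β₁ ^ p ≤ a ^ p)
    (hE : -θ * m * (μ / a) ^ p ≤ E₀)
    (hS : m * (β₁ / a) ^ (-(p * θ)) ≤ Sg) :
    m ≤ E₀ + Sg := by
  set x : ℝ := (β₁ / a) ^ p with hxdef
  have hba0 : 0 < β₁ / a := div_pos hβ0 ha
  have hx0 : 0 < x := Real.rpow_pos_of_pos hba0 p
  have hx1 : x ≤ 1 := Real.rpow_le_one hba0.le (div_le_one_of_le₀ hβa ha.le) (by linarith)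
  have hap : 0 < a ^ p := Real.rpow_pos_of_pos ha p
  -- (μ/a)^p ≤ 1 - x
  have hμa : (μ / a) ^ p ≤ 1 - x := by
    have h1 : (μ / a) ^ p = μ ^ p / a ^ p := Real.div_rpow hμ ha.le p
    have h2 : x = β₁ ^ p / a ^ p := Real.div_rpow hβ0.le ha.le p
    rw [h1, h2]
    rw [div_le_iff₀ hap]
    have : (1 - β₁ ^ p / a ^ p) * a ^ p = a ^ p - β₁ ^ p := by
      field_simp
    rw [this]
    linarith
  -- rewrite Sg bound
  have hrw : (β₁ / a) ^ (-(p * θ)) = x ^ (-θ) := by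
    rw [show -(p * θ) = p * (-θ) by ring, Real.rpow_mul hba0.le]
  rw [hrw] at hS
  have hkey := key_rpow_bound hx0 hx1 hθ0 hθ1
  have h3 : θ * m * (μ / a) ^ p ≤ θ * m * (1 - x) :=
    mul_le_mul_of_nonneg_left hμa (by positivity)
  have h4 : m * (1 + θ * (1 - x)) ≤ m * x ^ (-θ) :=
    mul_le_mul_of_nonneg_left hkey hm.le
  nlinarith
end
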